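/- Let n = g_{−s} ⊕ ⋯ ⊕ g_{−1} be a stratified nilpotent Lie algebra over ℝ with dim g_{−1} = 2 and [g_{−1}, g_{−1}] ≠ {0}, and let ⟨·,·⟩ be an inner product on g_{−1}. Suppose φ ∈ h₀(n) is conformal on the first stratum, i.e. there exists λ ∈ ℝ with ⟨φX, Y⟩ + ⟨X, φY⟩ = λ⟨X, Y⟩ for all X, Y ∈ g_{−1}. Then λ = 0 and the restriction of φ to g_{−1} is skew-symmetric: ⟨φX, Y⟩ = −⟨X, φY⟩ for all X, Y ∈ g_{−1}. -/

import Mathlib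

/-- Let `n = g_{−s} ⊕ ⋯ ⊕ g_{−1}` be a stratified nilpotent Lie algebra over `ℝ` with
`dim g_{−1} = 2` and `[g_{−1}, g_{−1}] ≠ {0}`, and let `B` be an inner product on
`g_{−1}` (a bilinear form on `n` which is symmetric and positive definite on `g_{−1}`).
If `φ ∈ h₀(n)` is conformal on the first stratum, i.e.
`B(φX, Y) + B(X, φY) = λ B(X, Y)` for all `X, Y ∈ g_{−1}`, then `λ = 0` and the
restriction of `φ` to `g_{−1}` is skew-symmetric. -/
theorem statement13 {L : Type*} [LieRing L] [LieAlgebra ℝ L] [Module.Finite ℝ L]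
    (s : ℕ) (hs : 1 ≤ s) (g : ℕ → Submodule ℝ L)
    (hg0 : g 0 = ⊥) (hgtop : ∀ m, s < m → g m = ⊥)
    (hsup : (⨆ i, g i) = ⊤)
    (hindep : ∀ i, Disjoint (g i) (⨆ j, ⨆ _ : j ≠ i, g j))
    (hbrk : ∀ i j, ∀ X ∈ g i, ∀ Y ∈ g j, ⁅X, Y⁆ ∈ g (i + j))
    (hgen : ∀ j, 1 ≤ j → j + 1 ≤ s →
      g (j + 1) = Submodule.span ℝ {Z | ∃ X ∈ g 1, ∃ Y ∈ g j, ⁅X, Y⁆ = Z})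
    (hdim : Module.finrank ℝ (g 1) = 2)
    (hnontriv : ∃ X ∈ g 1, ∃ Y ∈ g 1, ⁅X, Y⁆ ≠ 0)
    (B : L →ₗ[ℝ] L →ₗ[ℝ] ℝ)
    (hBsymm : ∀ X ∈ g 1, ∀ Y ∈ g 1, B X Y = B Y X)
    (hBpos : ∀ X ∈ g 1, X ≠ 0 → 0 < B X X)
    (φ : L →ₗ[ℝ] L)
    (hder : ∀ X Y : L, φ ⁅X, Y⁆ = ⁅φ X, Y⁆ + ⁅X, φ Y⁆)
    (hφ1 : ∀ X ∈ g 1, φ X ∈ g 1)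
    (hφ0 : ∀ j, 2 ≤ j → j ≤ s → ∀ X ∈ g j, φ X = 0)
    (lam : ℝ)
    (hconf : ∀ X ∈ g 1, ∀ Y ∈ g 1, B (φ X) Y + B X (φ Y) = lam * B X Y) :
    lam = 0 ∧ ∀ X ∈ g 1, ∀ Y ∈ g 1, B (φ X) Y = -(B X (φ Y)) := by
  classical
  obtain ⟨X0, hX0, Y0, hY0, hXY⟩ := hnontriv
  -- φ kills brackets of first-stratum elements
  have hkey : ∀ X ∈ g 1, ∀ Y ∈ g 1, ⁅φ X, Y⁆ + ⁅X, φ Y⁆ = 0 := by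
    intro X hX Y hY
    have hb : ⁅X, Y⁆ ∈ g 2 := hbrk 1 1 X hX Y hY
    rcases le_or_gt 2 s with h | h
    · have h0 := hφ0 2 le_rfl h ⁅X, Y⁆ hb
      rw [hder] at h0
      exact h0
    · have h2 : g 2 = ⊥ := hgtop 2 (by omega)
      rw [h2, Submodule.mem_bot] at hb
      have := hder X Y
      rw [hb, map_zero] at this
      exact this.symm
  have hY0ne : Y0 ≠ 0 := by
    intro h; apply hXY; rw [h, lie_zero]
  have hX0ne : X0 ≠ 0 := by
    intro h; apply hXY; rw [h, zero_lie]
  -- linear independence of X0, Y0 in the subtype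
  set x : g 1 := ⟨X0, hX0⟩ with hx
  set y : g 1 := ⟨Y0, hY0⟩ with hy
  have li : LinearIndependent ℝ ![x, y] := by
    rw [LinearIndependent.pair_iff]
    intro a b hab
    have hab' : a • X0 + b • Y0 = 0 := by
      have := congrArg (Subtype.val) hab
      simpa [hx, hy] using this
    have ha : a = 0 := by
      have h1 : ⁅a • X0 + b • Y0, Y0⁆ = 0 := by rw [hab', zero_lie]
      rw [add_lie, smul_lie, smul_lie, lie_self, smul_zero, add_zero] at h1
      rcases smul_eq_zero.mp h1 with h | h
      · exact h
      · exact absurd h hXY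
    refine ⟨ha, ?_⟩
    rw [ha, zero_smul, zero_add] at hab'
    rcases smul_eq_zero.mp hab' with h | h
    · exact h
    · exact absurd h hY0ne
  let bas : Module.Basis (Fin 2) ℝ (g 1) :=
    basisOfLinearIndependentOfCardEqFinrank li (by rw [hdim]; simp)
  have hbas : ⇑bas = ![x, y] :=
    coe_basisOfLinearIndependentOfCardEqFinrank li _
  -- every element of g 1 is a combination of X0, Y0
  have hcomb : ∀ v : L, v ∈ g 1 → ∃ a b : ℝ, v = a • X0 + b • Y0 := by
    intro v hv
    have hr := bas.sum_repr ⟨v, hv⟩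
    rw [Fin.sum_univ_two, hbas] at hr
    simp only [Matrix.cons_val_zero, Matrix.cons_val_one, Matrix.head_cons, hbas] at hr
    refine ⟨bas.repr ⟨v, hv⟩ 0, bas.repr ⟨v, hv⟩ 1, ?_⟩
    have := congrArg (Subtype.val) hr
    simpa [hx, hy] using this.symm
  obtain ⟨a, b, hfx⟩ := hcomb (φ X0) (hφ1 X0 hX0)
  obtain ⟨c, d, hfy⟩ := hcomb (φ Y0) (hφ1 Y0 hY0)
  -- trace zero: a + d = 0
  have htr : a + d = 0 := by
    have h := hkey X0 hX0 Y0 hY0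
    rw [hfx, hfy] at h
    have h' : (a + d) • ⁅X0, Y0⁆ = 0 := by
      rw [add_smul]
      simpa [add_lie, lie_add, smul_lie, lie_smul, lie_self,
        add_assoc, add_comm, add_left_comm] using h
    rcases smul_eq_zero.mp h' with h | h
    · exact h
    · exact absurd h hXY
  set P := B X0 X0 with hP
  set Q := B X0 Y0 with hQ
  set R := B Y0 Y0 with hR
  have hQ' : B Y0 X0 = Q := (hBsymm X0 hX0 Y0 hY0).symm
  have e1 : 2 * a * P + 2 * b * Q = lam * P := by
    have h := hconf X0 hX0 X0 hX0
    rw [hfx] at h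
    simp only [map_add, map_smul, LinearMap.add_apply, LinearMap.smul_apply,
      smul_eq_mul, ← hP, ← hQ, hQ'] at h
    linarith
  have e2 : 2 * c * Q + 2 * d * R = lam * R := by
    have h := hconf Y0 hY0 Y0 hY0
    rw [hfy] at h
    simp only [map_add, map_smul, LinearMap.add_apply, LinearMap.smul_apply,
      smul_eq_mul, ← hR, ← hQ, hQ'] at h
    linarith
  have e3 : a * Q + b * R + c * P + d * Q = lam * Q := by
    have h := hconf X0 hX0 Y0 hY0
    rw [hfx, hfy] at h
    simp only [map_add, map_smul, LinearMap.add_apply, LinearMap.smul_apply,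
      smul_eq_mul, ← hP, ← hQ, ← hR, hQ'] at h
    linarith
  -- positivity: P * R - Q^2 > 0
  have hRpos : 0 < R := hBpos Y0 hY0 hY0ne
  have hZmem : R • X0 - Q • Y0 ∈ g 1 :=
    Submodule.sub_mem _ (Submodule.smul_mem _ _ hX0) (Submodule.smul_mem _ _ hY0)
  have hZne : R • X0 - Q • Y0 ≠ 0 := by
    intro h
    have h1 : ⁅R • X0 - Q • Y0, Y0⁆ = 0 := by rw [h, zero_lie]
    rw [sub_lie, smul_lie, smul_lie, lie_self, smul_zero, sub_zero] at h1
    rcases smul_eq_zero.mp h1 with h | h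
    · exact absurd h (ne_of_gt hRpos)
    · exact absurd h hXY
  have hZpos : 0 < B (R • X0 - Q • Y0) (R • X0 - Q • Y0) := hBpos _ hZmem hZne
  have hBZ : B (R • X0 - Q • Y0) (R • X0 - Q • Y0) = R * (P * R - Q * Q) := by
    simp only [map_sub, map_smul, LinearMap.sub_apply, LinearMap.smul_apply,
      smul_eq_mul, ← hP, ← hQ, ← hR, hQ']
    ring
  have hdet : 0 < P * R - Q * Q := by
    rw [hBZ] at hZpos
    rcases mul_pos_iff.mp hZpos with ⟨_, h⟩ | ⟨h, _⟩
    · exact h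
    · linarith
  have hlam : lam = 0 := by
    have key : lam * (P * R - Q * Q) = 0 := by
      linear_combination -(R/2)*e1 - (P/2)*e2 + Q*e3 + (P*R - Q*Q)*htr
    rcases mul_eq_zero.mp key with h | h
    · exact h
    · exact absurd h (ne_of_gt hdet)
  refine ⟨hlam, ?_⟩
  intro X hX Y hY
  have h := hconf X hX Y hY
  rw [hlam, zero_mul] at h
  linarith
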